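/- Let (X_α)_{α ∈ A} be a family of topological spaces, X := ∏_{α ∈ A} X_α with the product topology. For each α ∈ A let K_α ⊆ X_α be a closed, quasi-compact subset, and set K := ∏_{α ∈ A} K_α. Let (xⁿ)_{n ∈ ℕ} be a sequence in X such that Supp_K(xⁿ) := {α ∈ A : xⁿ_α ∉ K_α} is finite for each n and Supp_K(xᵐ) ∩ Supp_K(xˡ) = ∅ whenever m ≠ l. Then the sequence (xⁿ) has a cluster point z ∈ X, and every cluster point of (xⁿ) lies in K. -/

import Mathlib

open Filter Set Topology

theorem cluster_point_of_sequence_with_disjoint_supports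
    {A : Type*} {X : A → Type*} [∀ α, TopologicalSpace (X α)]
    (K : ∀ α, Set (X α)) (hKcl : ∀ α, IsClosed (K α)) (hKq : ∀ α, IsCompact (K α))
    (x : ℕ → ∀ α, X α)
    (hfin : ∀ n, {α | x n α ∉ K α}.Finite)
    (hdisj : ∀ m l, m ≠ l → {α | x m α ∉ K α} ∩ {α | x l α ∉ K α} = ∅) :
    (∃ z : ∀ α, X α, MapClusterPt z Filter.atTop x) ∧
    (∀ z : ∀ α, X α, MapClusterPt z Filter.atTop x → z ∈ Set.pi Set.univ K) := by
  classical
  -- each coordinate's "bad" set of indices is a subsingleton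
  have hsub : ∀ α, {n : ℕ | x n α ∉ K α}.Subsingleton := by
    intro α m hm l hl
    by_contra hne
    have hα : α ∈ {α | x m α ∉ K α} ∩ {α | x l α ∉ K α} := ⟨hm, hl⟩
    rw [hdisj m l hne] at hα
    exact hα
  have hev : ∀ α, ∀ᶠ n in atTop, x n α ∈ K α := by
    intro α
    rw [← Nat.cofinite_eq_atTop]
    exact (hsub α).finite.eventually_cofinite_notMem.mono (by simp)
  have hKne : ∀ α, (K α).Nonempty := by
    intro α
    by_contra h
    rw [Set.not_nonempty_iff_eq_empty] at h
    have h0 : (0:ℕ) ∈ {n : ℕ | x n α ∉ K α} := by simp [h]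
    have h1 : (1:ℕ) ∈ {n : ℕ | x n α ∉ K α} := by simp [h]
    exact absurd (hsub α h0 h1) (by norm_num)
  choose c hc using hKne
  set y : ℕ → ∀ α, X α := fun n α => if x n α ∈ K α then x n α else c α with hy
  have hyK : ∀ n, y n ∈ Set.pi Set.univ K := by
    intro n α _
    by_cases h : x n α ∈ K α <;> simp [hy, h, hc]
  constructor
  · -- existence of a cluster point
    have hcomp : IsCompact (Set.pi Set.univ K) := isCompact_univ_pi hKq
    have hle : map y atTop ≤ 𝓟 (Set.pi Set.univ K) := by
      rw [le_principal_iff, mem_map]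
      exact Eventually.of_forall hyK
    obtain ⟨z, _, hz⟩ := hcomp.exists_clusterPt hle
    refine ⟨z, ?_⟩
    rw [mapClusterPt_iff_frequently]
    intro U hU
    rw [nhds_pi, Filter.mem_pi] at hU
    obtain ⟨I, hIfin, t, ht, htU⟩ := hU
    have hpiU : Set.pi I t ∈ 𝓝 z := by
      rw [nhds_pi, Filter.mem_pi]
      exact ⟨I, hIfin, t, ht, subset_rfl⟩
    have hfreq : ∃ᶠ n in atTop, y n ∈ Set.pi I t :=
      mapClusterPt_iff_frequently.mp hz (Set.pi I t) hpiU
    have hB : (⋃ α ∈ I, {n : ℕ | x n α ∉ K α}).Finite :=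
      hIfin.biUnion fun α _ => (hsub α).finite
    have hevB : ∀ᶠ n in atTop, n ∉ ⋃ α ∈ I, {n : ℕ | x n α ∉ K α} := by
      rw [← Nat.cofinite_eq_atTop]
      exact hB.eventually_cofinite_notMem
    refine ((hfreq.and_eventually hevB).mono ?_)
    rintro n ⟨hn, hnB⟩
    apply htU
    intro α hα
    have hK : x n α ∈ K α := by
      by_contra h
      exact hnB (Set.mem_biUnion hα h)
    have hxy : y n α = x n α := by simp [hy, hK]
    rw [← hxy]
    exact hn α hα
  · -- every cluster point lies in K
    intro z hz α _
    have hcl : MapClusterPt (z α) atTop ((fun f : ∀ β, X β => f α) ∘ x) :=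
      hz.continuousAt_comp ((continuous_apply α).continuousAt)
    have hle : map ((fun f : ∀ β, X β => f α) ∘ x) atTop ≤ 𝓟 (K α) := by
      rw [le_principal_iff, mem_map]
      exact hev α
    have hclp : ClusterPt (z α) (𝓟 (K α)) := hcl.clusterPt.mono hle
    rw [← mem_closure_iff_clusterPt] at hclp
    rwa [(hKcl α).closure_eq] at hclp
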